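/- Let γ : 𝔸 → S be a precomplete generalized numbering on a pca 𝔸 in which 0̄, 1̄ are separable. Then γ is not injective. -/
import Mathlib


/-- Partial application lifted to `Option` (strict: defined iff both sides defined). -/
def pap {A : Type*} (f : A → A → Option A) (x y : Option A) : Option A :=
  x.bind fun a => y.bind fun b => f a b

/-- A partial combinatory algebra, via Feferman's characterization with combinators `k`, `s`. -/
structure PCA (A : Type*) where
  app : A → A → Option A
  k : A
  s : A
  k_spec : ∀ a b : A, pap app (pap app (some k) (some a)) (some b) = some a
  s_defined : ∀ a b : A, (pap app (pap app (some s) (some a)) (some b)).isSome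
  s_spec : ∀ a b c : A,
    pap app (pap app (pap app (some s) (some a)) (some b)) (some c)
      = pap app (pap app (some a) (some c)) (pap app (some b) (some c))

namespace PCA
variable {A : Type*}

/-- Application on (possibly undefined) terms. -/
def ap (P : PCA A) (x y : Option A) : Option A := pap P.app x y

def K' (P : PCA A) : Option A := some P.k
def S' (P : PCA A) : Option A := some P.s
/-- The identity combinator `i = s·k·k`. -/
def i (P : PCA A) : Option A := P.ap (P.ap P.S' P.K') P.K'
/-- `true = k`. -/
def tru (P : PCA A) : Option A := P.K'
/-- `false = k·i`. -/
def fls (P : PCA A) : Option A := P.ap P.K' P.i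
/-- Pairing `⟨a,b⟩ = λ*z. z·a·b`, implemented as `s·(s·i·(k·a))·(k·b)`. -/
def pair (P : PCA A) (x y : Option A) : Option A :=
  P.ap (P.ap P.S' (P.ap (P.ap P.S' P.i) (P.ap P.K' x))) (P.ap P.K' y)
/-- Numerals: `0̄ = i`, `(n+1)‾ = ⟨false, n̄⟩`. -/
def numeral (P : PCA A) : ℕ → Option A
  | 0 => P.i
  | n + 1 => P.pair P.fls (P.numeral n)
/-- An element is total if it is defined on every argument. -/
def total (P : PCA A) (f : A) : Prop := ∀ a : A, (P.app f a).isSome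

end PCA

/-- `0̄` and `1̄` are separable in the pca `P`. -/
def PCA.Sep01 {A : Type*} (P : PCA A) : Prop :=
  ∃ c : A, P.total c ∧
    (∀ a : A, P.app c a = P.numeral 0 ∨ P.app c a = P.numeral 1) ∧
    ∀ a : A, (P.app c a = P.numeral 0 → some a ≠ P.numeral 1) ∧
             (P.app c a = P.numeral 1 → some a ≠ P.numeral 0)

namespace PCA
variable {A : Type*} (P : PCA A)


lemma ap_some (a b : A) : P.ap (some a) (some b) = P.app a b := rfl

lemma isSome_of_ap {x y : Option A} (h : (P.ap x y).isSome) : (∃ a, x = some a) ∧ ∃ b, y = some b := by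
  cases x with
  | none => simp [ap, pap] at h
  | some a =>
    cases y with
    | none => simp [ap, pap] at h
    | some b => exact ⟨⟨a, rfl⟩, ⟨b, rfl⟩⟩

lemma k_spec' (a b : A) : P.ap (P.ap P.K' (some a)) (some b) = some a := P.k_spec a b

lemma s_defined' (a b : A) : (P.ap (P.ap P.S' (some a)) (some b)).isSome := P.s_defined a b

lemma s_spec' (a b c : A) :
    P.ap (P.ap (P.ap P.S' (some a)) (some b)) (some c)
      = P.ap (P.ap (some a) (some c)) (P.ap (some b) (some c)) := P.s_spec a b c

lemma kap_some (a : A) : ∃ e, P.ap P.K' (some a) = some e := by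
  have h := P.k_spec' a a
  rcases (P.isSome_of_ap (x := P.ap P.K' (some a)) (y := some a)
    (by rw [h]; rfl)).1 with ⟨e, he⟩
  exact ⟨e, he⟩

lemma kconst {a : A} {y : Option A} (hy : ∃ b, y = some b) :
    P.ap (P.ap P.K' (some a)) y = some a := by
  rcases hy with ⟨b, rfl⟩; exact P.k_spec' a b

lemma i_some : ∃ e, P.i = some e := by
  rcases Option.isSome_iff_exists.mp (P.s_defined' P.k P.k) with ⟨e, he⟩
  exact ⟨e, he⟩

lemma i_spec (a : A) : P.ap P.i (some a) = some a := by
  rcases P.kap_some a with ⟨e, he⟩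
  show P.ap (P.ap (P.ap P.S' P.K') P.K') (some a) = some a
  rw [show P.K' = some P.k from rfl, P.s_spec' P.k P.k a,
    show (some P.k : Option A) = P.K' from rfl]
  exact P.kconst ⟨e, he⟩

-- s applied to two defined things is defined (with some witnesses)
lemma sap_some {x y : Option A} (hx : ∃ a, x = some a) (hy : ∃ b, y = some b) :
    ∃ e, P.ap (P.ap P.S' x) y = some e := by
  rcases hx with ⟨a, rfl⟩; rcases hy with ⟨b, rfl⟩
  exact Option.isSome_iff_exists.mp (P.s_defined' a b)

lemma pair_some {x y : Option A} (hx : ∃ a, x = some a) (hy : ∃ b, y = some b) :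
    ∃ e, P.pair x y = some e := by
  rcases P.i_some with ⟨i0, hi⟩
  rcases hx with ⟨a, rfl⟩; rcases hy with ⟨b, rfl⟩
  rcases P.kap_some a with ⟨ka, hka⟩
  rcases P.kap_some b with ⟨kb, hkb⟩
  have hu : ∃ u, P.ap (P.ap P.S' P.i) (P.ap P.K' (some a)) = some u := by
    rw [hi, hka]; exact P.sap_some ⟨i0, rfl⟩ ⟨ka, rfl⟩
  rcases hu with ⟨u, hu⟩
  unfold pair
  rw [hu, hkb]
  exact P.sap_some ⟨u, rfl⟩ ⟨kb, rfl⟩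

lemma pair_spec (a b z : A) :
    P.ap (P.pair (some a) (some b)) (some z) = P.ap (P.ap (some z) (some a)) (some b) := by
  rcases P.i_some with ⟨i0, hi⟩
  rcases P.kap_some a with ⟨ka, hka⟩
  rcases P.kap_some b with ⟨kb, hkb⟩
  have hu : P.ap (P.ap P.S' P.i) (P.ap P.K' (some a)) =
      P.ap (P.ap P.S' (some i0)) (some ka) := by rw [hi, hka]
  rcases P.sap_some (x := some i0) (y := some ka) ⟨i0, rfl⟩ ⟨ka, rfl⟩ with ⟨u, hu2⟩
  unfold pair
  rw [hu, hu2, hkb, P.s_spec' u kb z, ← hu2, P.s_spec' i0 ka z, ← hi, P.i_spec z,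
    ← hka, P.k_spec' a z, ← hkb, P.k_spec' b z]

lemma fls_some : ∃ e, P.fls = some e := by
  rcases P.i_some with ⟨i0, hi⟩
  unfold fls; rw [hi]; exact P.kap_some i0

lemma fls_spec (a b : A) : P.ap (P.ap P.fls (some a)) (some b) = some b := by
  rcases P.i_some with ⟨i0, hi⟩
  show P.ap (P.ap (P.ap P.K' P.i) (some a)) (some b) = some b
  rw [hi, P.k_spec' i0 a, ← hi, P.i_spec]

lemma one_spec (z : A) :
    P.ap (P.numeral 1) (some z) = P.ap (P.ap (some z) P.fls) P.i := by
  rcases P.i_some with ⟨i0, hi⟩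
  rcases P.fls_some with ⟨f0, hf⟩
  show P.ap (P.pair P.fls P.i) (some z) = _
  rw [hf, hi, P.pair_spec]

end PCA

/-- A precomplete generalized numbering on a pca in which `0̄`,`1̄` are separable
is not injective. -/
theorem precomplete_generalized_numbering_not_injective {A S : Type*} (P : PCA A)
    (γ : A → S) (hsurj : Function.Surjective γ)
    (hpre : ∀ b : A, ∃ f : A, P.total f ∧
      ∀ a q : A, P.app b a = some q → ∃ p : A, P.app f a = some p ∧ γ p = γ q)
    (hsep : P.Sep01) :
    ¬ Function.Injective γ := by
  intro hinj
  obtain ⟨c, hctot, hc01, hcsep⟩ := hsep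
  -- basic witnesses
  obtain ⟨i0, hi⟩ := P.i_some
  obtain ⟨o1, ho⟩ : ∃ e, P.numeral 1 = some e := by
    obtain ⟨f0, hf⟩ := P.fls_some
    exact P.pair_some ⟨f0, hf⟩ ⟨i0, hi⟩
  -- the swapping gadget:  A0 = k·(k·1̄),  B0 = k·k,  C = k
  obtain ⟨ka1, hka1⟩ := P.kap_some o1           -- k·1̄
  obtain ⟨A0, hA0⟩ := P.kap_some ka1            -- k·(k·1̄)
  obtain ⟨B0, hB0⟩ := P.kap_some P.k            -- k·k
  obtain ⟨ki0, hki0⟩ := P.kap_some i0           -- k·0̄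
  -- G y = y·A0·B0·k
  set G : Option A → Option A :=
    fun y => P.ap (P.ap (P.ap y (some A0)) (some B0)) (some P.k) with hG
  have G_zero : G (P.numeral 0) = P.numeral 1 := by
    show P.ap (P.ap (P.ap P.i (some A0)) (some B0)) (some P.k) = P.numeral 1
    rw [P.i_spec, ← hA0, P.k_spec' ka1 B0, ← hka1, P.k_spec' o1 P.k, ho]
  have G_one : G (P.numeral 1) = P.numeral 0 := by
    obtain ⟨f0, hf⟩ := P.fls_some
    show P.ap (P.ap (P.ap (P.numeral 1) (some A0)) (some B0)) (some P.k) = P.numeral 0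
    rw [P.one_spec A0, hf, hi, ← hA0, P.k_spec' ka1 f0, ← hka1, P.k_spec' o1 i0, ← ho,
      P.one_spec B0, hf, hi, ← hB0, P.k_spec' P.k f0]
    show P.ap (P.ap P.K' (some i0)) (some P.k) = P.numeral 0
    rw [P.k_spec' i0 P.k, show P.numeral 0 = P.i from rfl, hi]
  -- the diagonal element e4 with  e4·x = G (c·(x·x))
  obtain ⟨w, hw⟩ := P.sap_some ⟨i0, hi⟩ ⟨i0, hi⟩      -- s·i·i  (rewritten form)
  have w_spec : ∀ x : A, P.ap (some w) (some x) = P.ap (some x) (some x) := by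
    intro x
    rw [← hw, hi, P.s_spec' i0 i0 x, ← hi, P.i_spec]
  obtain ⟨kc, hkc⟩ := P.kap_some c
  obtain ⟨e1, he1⟩ := P.sap_some ⟨kc, rfl⟩ ⟨w, rfl⟩    -- s·(k·c)·w
  have e1_spec : ∀ x : A, P.ap (some e1) (some x)
      = P.ap (some c) (P.ap (some x) (some x)) := by
    intro x
    rw [← he1, P.s_spec' kc w x, ← hkc, P.k_spec' c x, w_spec]
  obtain ⟨kA, hkA⟩ := P.kap_some A0
  obtain ⟨e2, he2⟩ := P.sap_some ⟨e1, rfl⟩ ⟨kA, rfl⟩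
  have e2_spec : ∀ x : A, P.ap (some e2) (some x)
      = P.ap (P.ap (some c) (P.ap (some x) (some x))) (some A0) := by
    intro x
    rw [← he2, P.s_spec' e1 kA x, ← hkA, P.k_spec' A0 x, e1_spec]
  obtain ⟨kB, hkB⟩ := P.kap_some B0
  obtain ⟨e3, he3⟩ := P.sap_some ⟨e2, rfl⟩ ⟨kB, rfl⟩
  have e3_spec : ∀ x : A, P.ap (some e3) (some x)
      = P.ap (P.ap (P.ap (some c) (P.ap (some x) (some x))) (some A0)) (some B0) := by
    intro x
    rw [← he3, P.s_spec' e2 kB x, ← hkB, P.k_spec' B0 x, e2_spec]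
  obtain ⟨kC, hkC⟩ := P.kap_some P.k
  obtain ⟨e4, he4⟩ := P.sap_some ⟨e3, rfl⟩ ⟨kC, rfl⟩
  have e4_spec : ∀ x : A, P.ap (some e4) (some x)
      = G (P.ap (some c) (P.ap (some x) (some x))) := by
    intro x
    rw [hG]
    rw [← he4, P.s_spec' e3 kC x, ← hkC, P.k_spec' P.k x, e3_spec]
  -- get the total extension f of e4
  obtain ⟨f, hftot, hf⟩ := hpre e4
  obtain ⟨d, hd⟩ := Option.isSome_iff_exists.mp (hftot f)
  have hcd := hc01 d
  have key : ∀ q : A, P.app e4 f = some q → P.app f f = some q := by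
    intro q hq
    obtain ⟨p, hp, hpq⟩ := hf f q hq
    rwa [hinj hpq] at hp
  have he4f : P.app e4 f = G (P.ap (some c) (some d)) := by
    have := e4_spec f
    rw [show P.ap (some f) (some f) = P.app f f from rfl, hd] at this
    exact this
  rcases hcd with h0 | h1
  · have : P.app e4 f = some o1 := by
      rw [he4f, show P.ap (some c) (some d) = P.app c d from rfl, h0, G_zero, ho]
    have hffo := key o1 this
    rw [hd] at hffo
    exact (hcsep d).1 h0 (hffo.trans ho.symm)
  · have : P.app e4 f = some i0 := by
      rw [he4f, show P.ap (some c) (some d) = P.app c d from rfl, h1, G_one,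
        show P.numeral 0 = P.i from rfl, hi]
    have hffo := key i0 this
    rw [hd] at hffo
    exact (hcsep d).2 h1 (hffo.trans hi.symm)
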